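/- If (x¹, x²) and (y¹, y²) are strong autarkies for f, then their join (x¹ ∨ y¹, x² ∧ y²) is a strong autarky for f, and in particular x¹ ∨ y¹ ≤ x² ∧ y² componentwise. -/

import Mathlib

private lemma fin_val_inf {n : ℕ} (a b : Fin (n+1)) : (a ⊓ b).val = min a.val b.val := by
  rw [min_def, min_def]
  split_ifs with h h' h' <;> first | rfl | (exfalso; rw [Fin.le_def] at *; omega)

private lemma fin_val_sup {n : ℕ} (a b : Fin (n+1)) : (a ⊔ b).val = max a.val b.val := by
  rw [max_def, max_def]
  split_ifs with h h' h' <;> first | rfl | (exfalso; rw [Fin.le_def] at *; omega)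

/-- The join `(x¹ ⊔ y¹, x² ⊓ y²)` of two strong autarkies `(x¹, x²)`,
`(y¹, y²)` for `f` is again a strong autarky for `f`; in particular
`x¹ ⊔ y¹ ≤ x² ⊓ y²` componentwise. -/
theorem join_strong_autarkies
    {V : Type*} [Fintype V] (L : ℕ) (f : (V → Fin (L + 1)) → ℝ)
    (x1 x2 y1 y2 : V → Fin (L + 1))
    (hx : x1 ≤ x2) (hy : y1 ≤ y2)
    (hxw : ∀ x, f ((x ⊔ x1) ⊓ x2) ≤ f x)
    (hxs : ∀ x, (x ⊔ x1) ⊓ x2 ≠ x → f ((x ⊔ x1) ⊓ x2) < f x)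
    (hyw : ∀ x, f ((x ⊔ y1) ⊓ y2) ≤ f x)
    (hys : ∀ x, (x ⊔ y1) ⊓ y2 ≠ x → f ((x ⊔ y1) ⊓ y2) < f x) :
    x1 ⊔ y1 ≤ x2 ⊓ y2 ∧
    (∀ x, f ((x ⊔ (x1 ⊔ y1)) ⊓ (x2 ⊓ y2)) ≤ f x) ∧
    (∀ x, (x ⊔ (x1 ⊔ y1)) ⊓ (x2 ⊓ y2) ≠ x → f ((x ⊔ (x1 ⊔ y1)) ⊓ (x2 ⊓ y2)) < f x) := by
  set A : (V → Fin (L + 1)) → (V → Fin (L + 1)) := fun x => (x ⊔ x1) ⊓ x2 with hA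
  set B : (V → Fin (L + 1)) → (V → Fin (L + 1)) := fun x => (x ⊔ y1) ⊓ y2 with hB
  -- find a common fixed point z of A and B
  obtain ⟨z, hAz, hBz⟩ : ∃ z, A z = z ∧ B z = z := by
    by_contra hcon
    push_neg at hcon
    set g : ℕ → (V → Fin (L + 1)) := fun n => (fun w => B (A w))^[n] y1 with hg
    have hstep : ∀ n, f (g (n + 1)) < f (g n) := by
      intro n
      have hgs : g (n + 1) = B (A (g n)) := Function.iterate_succ_apply' _ n y1
      rw [hgs]
      by_cases hfix : A (g n) = g n
      · have hBne : B (g n) ≠ g n := hcon (g n) hfix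
        rw [hfix]
        exact hys (g n) hBne
      · exact lt_of_le_of_lt (hyw (A (g n))) (hxs (g n) hfix)
    have hanti : StrictAnti (fun n => f (g n)) := strictAnti_nat_of_succ_lt hstep
    obtain ⟨m, n, hmn, heq⟩ := Finite.exists_ne_map_eq_of_infinite g
    exact hmn (hanti.injective (by rw [heq]))
  have hzx1 : x1 ≤ z := by
    calc x1 ≤ (z ⊔ x1) ⊓ x2 := le_inf le_sup_right hx
    _ = z := hAz
  have hzx2 : z ≤ x2 := by
    calc z = (z ⊔ x1) ⊓ x2 := hAz.symm
    _ ≤ x2 := inf_le_right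
  have hzy1 : y1 ≤ z := by
    calc y1 ≤ (z ⊔ y1) ⊓ y2 := le_inf le_sup_right hy
    _ = z := hBz
  have hzy2 : z ≤ y2 := by
    calc z = (z ⊔ y1) ⊓ y2 := hBz.symm
    _ ≤ y2 := inf_le_right
  have hx1y2 : x1 ≤ y2 := hzx1.trans hzy2
  have hy1x2 : y1 ≤ x2 := hzy1.trans hzx2
  -- commutation: the combined operator is B ∘ A
  have hcomm : ∀ x, (x ⊔ (x1 ⊔ y1)) ⊓ (x2 ⊓ y2) = B (A x) := by
    intro x
    funext v
    have h1 : x1 v ≤ x2 v := hx v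
    have h2 : y1 v ≤ y2 v := hy v
    have h3 : x1 v ≤ y2 v := hx1y2 v
    have h4 : y1 v ≤ x2 v := hy1x2 v
    rw [Fin.le_def] at h1 h2 h3 h4
    simp only [hA, hB, Pi.sup_apply, Pi.inf_apply]
    apply Fin.val_injective
    simp only [fin_val_inf, fin_val_sup]
    omega
  refine ⟨sup_le (le_inf hx hx1y2) (le_inf hy1x2 hy), ?_, ?_⟩
  · intro x
    rw [hcomm x]
    exact (hyw (A x)).trans (hxw x)
  · intro x hne
    rw [hcomm] at hne ⊢
    by_cases hfix : A x = x
    · rw [hfix] at hne ⊢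
      exact hys x hne
    · exact lt_of_le_of_lt (hyw (A x)) (hxs x hfix)
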